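/- The rooted tree in which the root has 2 children, each vertex at depth 1 has 3 children, each vertex at depth 2 has 4 children, and in general each vertex at depth d has d+2 children, is not g-tempered for any unbounded increasing function g : [1,∞) → [0,∞). -/

import Mathlib

open Filter

/-- Vertex degree (cardinality of the neighbour set). -/
noncomputable def deg {V : Type*} (G : SimpleGraph V) (x : V) : ℕ :=
  (G.neighborSet x).ncard

/-- `G(A;g)`: average of `g` of the degrees over the vertex set of a subgraph. -/
noncomputable def degAvg {V : Type*} (G : SimpleGraph V) (g : ℝ → ℝ)
    (A : G.Subgraph) : ℝ :=
  (∑ᶠ x ∈ A.verts, g (deg G x)) / (A.verts.ncard : ℝ)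

/-- An animal: a finite connected subgraph. -/
def IsAnimal {V : Type*} (G : SimpleGraph V) (A : G.Subgraph) : Prop :=
  A.Connected ∧ A.verts.Finite

/-- The ball `V_r(x)` of radius `r` around `x` in the graph distance. -/
def gball {V : Type*} (G : SimpleGraph V) (x : V) (r : ℕ) : Set V :=
  {y | G.dist x y ≤ r}

/-- `G` is `g`-tempered: there is `γ < ∞` such that for every vertex `x` there is a
strictly increasing sequence `{N_k} ⊆ ℕ` with `G(A;g) ≤ γ` for every animal `A`
contained in the ball of radius `N_k` around `x` having at least `N_k + 1` vertices. -/
def Tempered {V : Type*} (G : SimpleGraph V) (g : ℝ → ℝ) : Prop :=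
  ∃ γ : ℝ, ∀ x : V, ∃ N : ℕ → ℕ, StrictMono N ∧
    ∀ k : ℕ, ∀ A : G.Subgraph, IsAnimal G A → A.verts ⊆ gball G x (N k) →
      N k + 1 ≤ A.verts.ncard → degAvg G g A ≤ γ

/-- `G ∈ 𝔾₋(ϕ)`: there is `n*` such that `ρ(x,y) ≥ ϕ(m₋(x,y))` whenever
`m₋(x,y) = min{n(x),n(y)} ≥ n*`. -/
def Repulsive {V : Type*} (G : SimpleGraph V) (φ : ℝ → ℝ) : Prop :=
  ∃ nstar : ℕ, ∀ x y : V, x ≠ y →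
    (nstar : ℕ) ≤ min (deg G x) (deg G y) →
      φ (min (deg G x) (deg G y) : ℕ) ≤ (G.dist x y : ℝ)


/-- Vertices of the rooted tree: finite sequences `l` whose entry at depth `i`
chooses one of `i + 2` children (the root `[]` has 2 children, each of its
children has 3 children, and so on: each vertex at depth `d` has `d + 2` children). -/
def TreeV : Type := {l : List ℕ // ∀ i : Fin l.length, l.get i < (i : ℕ) + 2}

/-- The rooted tree graph: `a` and `b` are adjacent iff one is obtained from the
other by appending one more entry. -/
def TreeG : SimpleGraph TreeV :=
  SimpleGraph.fromRel (fun a b => ∃ c : ℕ, b.val = a.val ++ [c])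

def vtx (j : ℕ) : TreeV :=
  ⟨List.replicate j 0, by intro i; simp [List.getElem_replicate]⟩

lemma vtx_len (j : ℕ) : (vtx j).val.length = j := by simp [vtx]

lemma vtx_inj : Function.Injective vtx := by
  intro a b h
  have := congrArg (fun t : TreeV => t.val.length) h
  simpa [vtx_len] using this

lemma vtx_adj (j : ℕ) : TreeG.Adj (vtx j) (vtx (j + 1)) := by
  rw [TreeG, SimpleGraph.fromRel_adj]
  refine ⟨fun h => by simpa using vtx_inj h, Or.inl ⟨0, ?_⟩⟩
  simp [vtx, List.replicate_succ']

lemma nbr_finite (x : TreeV) : (TreeG.neighborSet x).Finite := by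
  have hsub : Subtype.val '' (TreeG.neighborSet x) ⊆
      {x.val.dropLast} ∪ (fun c => x.val ++ [c]) '' Set.Iio (x.val.length + 2) := by
    rintro l ⟨y, hy, rfl⟩
    simp only [SimpleGraph.mem_neighborSet, TreeG, SimpleGraph.fromRel_adj] at hy
    obtain ⟨hne, ⟨c, hc⟩ | ⟨c, hc⟩⟩ := hy
    · right
      refine ⟨c, ?_, hc.symm⟩
      have hlen : y.val.length = x.val.length + 1 := by rw [hc]; simp
      have := y.property ⟨x.val.length, by omega⟩
      simp only [List.get_eq_getElem] at this
      have h2 : (y.val)[(x.val).length]'(by omega) = c := by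
        simp only [hc]
        exact List.getElem_concat_length rfl _
      rw [h2] at this
      simpa using this
    · left
      have : x.val.dropLast = y.val := by rw [hc]; simp
      simp [this]
  have hfin : ({x.val.dropLast} ∪ (fun c => x.val ++ [c]) '' Set.Iio (x.val.length + 2) :
      Set (List ℕ)).Finite :=
    (Set.finite_singleton _).union ((Set.finite_Iio _).image _)
  exact Set.Finite.of_finite_image (hfin.subset hsub) Subtype.val_injective.injOn

def childv (j c : ℕ) (hc : c < j + 2) : TreeV :=
  ⟨List.replicate j 0 ++ [c], by
    intro i
    have hi : (i : ℕ) < j + 1 := by have := i.isLt; simpa using this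
    simp only [List.get_eq_getElem]
    rcases lt_or_ge (i : ℕ) j with h | h
    · rw [List.getElem_append_left (by simpa using h)]
      simp
    · have hij : (i : ℕ) = j := by omega
      have hg : (List.replicate j 0 ++ [c])[(i:ℕ)]'(by simpa using i.isLt) = c := by
        simp only [hij]
        exact List.getElem_concat_length (by simp) _
      rw [hg]; omega⟩

lemma childv_adj (j c : ℕ) (hc : c < j + 2) : TreeG.Adj (vtx j) (childv j c hc) := by
  rw [TreeG, SimpleGraph.fromRel_adj]
  refine ⟨fun h => ?_, Or.inl ⟨c, rfl⟩⟩
  have := congrArg (fun t : TreeV => t.val.length) h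
  simp [vtx, childv] at this

lemma deg_vtx_ge (j : ℕ) : j + 2 ≤ deg TreeG (vtx j) := by
  have hinj : Function.Injective (fun c : Fin (j + 2) => childv j c c.isLt) := by
    intro a b h
    have := congrArg (fun t : TreeV => t.val.getLast?) h
    simp only [childv, List.getLast?_append] at this
    simpa [Fin.ext_iff] using Option.some_injective _ (by simpa using this)
  have hsub : Set.range (fun c : Fin (j + 2) => childv j c c.isLt) ⊆
      TreeG.neighborSet (vtx j) := by
    rintro y ⟨c, rfl⟩
    exact childv_adj j c c.isLt
  calc j + 2 = (Set.range (fun c : Fin (j + 2) => childv j c c.isLt)).ncard := by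
        rw [← Set.image_univ, Set.ncard_image_of_injective _ hinj, Set.ncard_univ]
        simp
    _ ≤ deg TreeG (vtx j) := Set.ncard_le_ncard hsub (nbr_finite _)

def pw : (n : ℕ) → TreeG.Walk (vtx 0) (vtx n)
  | 0 => SimpleGraph.Walk.nil
  | n + 1 => (pw n).concat (vtx_adj n)

lemma pw_length (n : ℕ) : (pw n).length = n := by
  induction n with
  | zero => rfl
  | succ n ih => rw [pw, SimpleGraph.Walk.length_concat, ih]

lemma pw_support (n : ℕ) : (pw n).support = (List.range (n + 1)).map vtx := by
  induction n with
  | zero => rfl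
  | succ n ih =>
    rw [pw, SimpleGraph.Walk.support_concat, ih]
    simp [List.range_succ]

lemma dist_vtx (j : ℕ) : TreeG.dist (vtx 0) (vtx j) ≤ j := by
  have := SimpleGraph.dist_le (pw j)
  rwa [pw_length] at this

lemma pw_verts (n : ℕ) : (pw n).toSubgraph.verts = vtx '' Set.Iio (n + 1) := by
  rw [SimpleGraph.Walk.verts_toSubgraph]
  ext y
  simp [pw_support, List.mem_map, List.mem_range, Set.mem_image, Set.mem_Iio, eq_comm]

lemma pw_ncard (n : ℕ) : (pw n).toSubgraph.verts.ncard = n + 1 := by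
  rw [pw_verts, Set.ncard_image_of_injective _ vtx_inj, ← Finset.coe_range,
    Set.ncard_coe_finset, Finset.card_range]

/-- the rooted tree in which every vertex at depth `d` has `d + 2`
children is not `g`-tempered for any unbounded increasing `g`. -/
theorem stmt_8 (g : ℝ → ℝ) (hg : Monotone g)
    (hgTop : Filter.Tendsto g Filter.atTop Filter.atTop) :
    ¬ Tempered TreeG g := by
  rintro ⟨γ, hγ⟩
  obtain ⟨N, hNmono, hN⟩ := hγ (vtx 0)
  set c : ℝ := min (g 2) 0 with hcdef
  have hc0 : c ≤ 0 := min_le_right _ _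
  have hcg : c ≤ g 2 := min_le_left _ _
  set B : ℝ := max (2 * (γ - c) + 2) 0 with hBdef
  have hB0 : (0 : ℝ) ≤ B := le_max_right _ _
  have hB2 : 2 * (γ - c) + 2 ≤ B := le_max_left _ _
  obtain ⟨M, hM⟩ := Filter.eventually_atTop.1 (Filter.tendsto_atTop.1 hgTop B)
  set K := ⌈M⌉₊ with hK
  set k := 2 * K + 2 with hk
  set n := N k with hn
  have hkn : k ≤ n := hNmono.le_apply
  set m := n / 2 with hm
  have h2m : 2 * m ≤ n := by omega
  have hmK : K + 1 ≤ m := by omega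
  have hmn : m ≤ n := by omega
  set A := (pw n).toSubgraph with hA
  have hAnimal : IsAnimal TreeG A := ⟨(pw n).toSubgraph_connected, by
    rw [hA, pw_verts]; exact ((Set.finite_Iio _).image _)⟩
  have hsub : A.verts ⊆ gball TreeG (vtx 0) (N k) := by
    rw [hA, pw_verts]
    rintro y ⟨j, hj, rfl⟩
    have hj' : j ≤ n := by simpa [Set.mem_Iio] using Nat.lt_succ_iff.mp (by simpa using hj)
    exact le_trans (dist_vtx j) hj'
  have hcard : N k + 1 ≤ A.verts.ncard := by rw [hA, pw_ncard]
  have key := hN k A hAnimal hsub hcard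
  have hsum : (∑ᶠ x ∈ A.verts, g (deg TreeG x)) =
      ∑ j ∈ Finset.range (n + 1), g (deg TreeG (vtx j)) := by
    rw [hA, pw_verts, finsum_mem_image (vtx_inj.injOn), ← Finset.coe_range,
      finsum_mem_coe_finset]
  have hdegc : ∀ j : ℕ, ((j : ℝ) + 2) ≤ (deg TreeG (vtx j) : ℝ) := by
    intro j
    exact_mod_cast deg_vtx_ge j
  have hterm2 : ∀ j : ℕ, c ≤ g (deg TreeG (vtx j)) := by
    intro j
    refine le_trans hcg (hg ?_)
    have hj0 : (0 : ℝ) ≤ (j : ℝ) := Nat.cast_nonneg j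
    linarith [hdegc j]
  have htermB : ∀ j : ℕ, m ≤ j → B ≤ g (deg TreeG (vtx j)) := by
    intro j hj
    refine hM _ ?_
    have h1 : M ≤ (K : ℝ) := Nat.le_ceil M
    have h2 : (K : ℝ) ≤ (j : ℝ) := by exact_mod_cast le_trans (by omega : K ≤ m) hj
    linarith [hdegc j]
  have hsplit : ∑ j ∈ Finset.range (n + 1), g (deg TreeG (vtx j)) =
      (∑ j ∈ Finset.Ico 0 m, g (deg TreeG (vtx j))) +
      ∑ j ∈ Finset.Ico m (n + 1), g (deg TreeG (vtx j)) := by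
    rw [Finset.range_eq_Ico, Finset.sum_Ico_consecutive _ (Nat.zero_le m) (by omega)]
  have h1 : (m : ℝ) * c ≤ ∑ j ∈ Finset.Ico 0 m, g (deg TreeG (vtx j)) := by
    have := Finset.card_nsmul_le_sum (Finset.Ico 0 m)
      (fun j => g (deg TreeG (vtx j))) c (fun j _ => hterm2 j)
    simpa [nsmul_eq_mul] using this
  have h2 : ((n + 1 - m : ℕ) : ℝ) * B ≤ ∑ j ∈ Finset.Ico m (n + 1), g (deg TreeG (vtx j)) := by
    have := Finset.card_nsmul_le_sum (Finset.Ico m (n + 1))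
      (fun j => g (deg TreeG (vtx j))) B (fun j hj => htermB j (Finset.mem_Ico.mp hj).1)
    simpa [nsmul_eq_mul] using this
  have hcastm : ((n + 1 - m : ℕ) : ℝ) = (n : ℝ) + 1 - (m : ℝ) := by
    push_cast [Nat.cast_sub (by omega : m ≤ n + 1)]
    ring
  have hAvg : degAvg TreeG g A = (∑ j ∈ Finset.range (n + 1), g (deg TreeG (vtx j))) /
      ((n : ℝ) + 1) := by
    rw [degAvg, hsum, hA, pw_ncard]
    norm_num
  have hnpos : (0 : ℝ) < (n : ℝ) + 1 := by positivity
  have hlow : c + B / 2 ≤ degAvg TreeG g A := by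
    rw [hAvg, le_div_iff₀ hnpos]
    have hm1 : ((n : ℝ) + 1) * c ≤ (m : ℝ) * c := by
      apply mul_le_mul_of_nonpos_right _ hc0
      exact_mod_cast by omega
    have hm2 : ((n : ℝ) + 1) / 2 * B ≤ ((n : ℝ) + 1 - (m : ℝ)) * B := by
      apply mul_le_mul_of_nonneg_right _ hB0
      have : (2 : ℝ) * (m : ℝ) ≤ (n : ℝ) := by exact_mod_cast h2m
      linarith
    rw [hsplit]
    rw [hcastm] at h2
    nlinarith
  linarith [hB2, key, hlow]
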